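/- Let T₁ and T₂ be nonzero subspaces of a finite-dimensional real inner product space E with T₁ ∩ T₂ = {0} and T₁^⊥ ∩ T₂^⊥ = {0}. Set M := P_{T₁} ∘ P_{T₂} + P_{T₁^⊥} ∘ P_{T₂^⊥}, fix λ ∈ (0, 2), and set M_λ := (1 − λ)·Id + λ·M. Let c₁ denote the supremum of ⟨u, v⟩ over all unit vectors u ∈ T₁ and v ∈ T₂ (the cosine of the first principal angle). Then for every k ∈ ℕ, ‖M_λ^k‖ = (√((1 − λ)² + λ(2 − λ)·c₁²))^k, and √((1 − λ)² + λ(2 − λ)·c₁²) < 1; hence M_λ^k converges linearly to 0 with this optimal rate. -/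

import Mathlib

open RealInnerProductSpace

/-- The orthogonal projection onto a subspace, as a continuous linear endomorphism. -/
noncomputable def projCLM {E : Type*} [NormedAddCommGroup E] [InnerProductSpace ℝ E]
    [FiniteDimensional ℝ E] (T : Submodule ℝ E) : E →L[ℝ] E :=
  T.subtypeL.comp T.orthogonalProjection

/-- The cosine of the first principal angle between `T₁` and `T₂`: the supremum of
`⟪u, v⟫` over unit vectors `u ∈ T₁` and `v ∈ T₂`. -/
noncomputable def firstPrincipalCos {E : Type*} [NormedAddCommGroup E]
    [InnerProductSpace ℝ E] (T₁ T₂ : Submodule ℝ E) : ℝ :=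
  sSup { r : ℝ | ∃ u v : E, u ∈ T₁ ∧ v ∈ T₂ ∧ ‖u‖ = 1 ∧ ‖v‖ = 1 ∧ r = ⟪u, v⟫ }

section Aux

set_option linter.unusedSectionVars false

variable {E : Type*} [NormedAddCommGroup E] [InnerProductSpace ℝ E] [FiniteDimensional ℝ E]

/-! ### ring identities -/

private lemma ring_id1 {A : Type*} [Ring A] (p q : A) (hp : p*p = p) (hq : q*q = q) :
    (q*p + (1-q)*(1-p)) * (p*q + (1-p)*(1-q)) = 1 - (p - q)^2 := by
  have hp' : ∀ x, p*(p*x) = p*x := fun x => by rw [← mul_assoc, hp]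
  have hq' : ∀ x, q*(q*x) = q*x := fun x => by rw [← mul_assoc, hq]
  simp only [mul_add, add_mul, mul_sub, sub_mul, mul_one, one_mul, sub_sub_cancel, pow_two,
    mul_assoc, hp, hq, hp', hq']
  abel

private lemma ring_id2 {A : Type*} [Ring A] (p q : A) (hp : p*p = p) (hq : q*q = q) :
    (p*q + (1-p)*(1-q)) * (q*p + (1-q)*(1-p)) = 1 - (p - q)^2 := by
  have hp' : ∀ x, p*(p*x) = p*x := fun x => by rw [← mul_assoc, hp]
  have hq' : ∀ x, q*(q*x) = q*x := fun x => by rw [← mul_assoc, hq]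
  simp only [mul_add, add_mul, mul_sub, sub_mul, mul_one, one_mul, sub_sub_cancel, pow_two,
    mul_assoc, hp, hq, hp', hq']
  abel

private lemma ring_id3 {A : Type*} [Ring A] (p q : A) (hp : p*p = p) (hq : q*q = q) :
    (p*q + (1-p)*(1-q)) + (q*p + (1-q)*(1-p)) = 2*(1 - (p - q)^2) := by
  simp only [mul_add, add_mul, mul_sub, sub_mul, mul_one, one_mul, pow_two, two_mul, hp, hq]
  abel_nf
  simp [two_smul, ← one_add_one_eq_two]
  abel

/-! ### basic projection lemmas -/

lemma projCLM_apply (T : Submodule ℝ E) (x : E) : projCLM T x = Submodule.orthogonalProjectionOnto T x := rfl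

lemma projCLM_mem (T : Submodule ℝ E) (x : E) : projCLM T x ∈ T := (Submodule.orthogonalProjection T x).2

lemma projCLM_eq_self {T : Submodule ℝ E} {x : E} (h : x ∈ T) : projCLM T x = x := by
  exact Submodule.starProjection_eq_self_iff.2 h

lemma projCLM_eq_zero {T : Submodule ℝ E} {x : E} (h : x ∈ Tᗮ) : projCLM T x = 0 := by
  simp [projCLM_apply, Submodule.orthogonalProjectionOnto_apply_of_mem_orthogonal h]

lemma projCLM_idem (T : Submodule ℝ E) : projCLM T * projCLM T = projCLM T := by
  ext x
  show projCLM T (projCLM T x) = projCLM T x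
  exact projCLM_eq_self (projCLM_mem T x)

lemma projCLM_isSelfAdjoint (T : Submodule ℝ E) : IsSelfAdjoint (projCLM T) :=
  isSelfAdjoint_starProjection T

lemma projCLM_star (T : Submodule ℝ E) : star (projCLM T) = projCLM T :=
  projCLM_isSelfAdjoint T

lemma projCLM_orthogonal (T : Submodule ℝ E) : projCLM Tᗮ = 1 - projCLM T := by
  ext x
  have h := Submodule.starProjection_add_starProjection_orthogonal (K := T) x
  show Tᗮ.starProjection x = x - T.starProjection x
  rw [eq_sub_iff_add_eq, add_comm]; exact h

lemma inner_projCLM_left (T : Submodule ℝ E) (x y : E) :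
    ⟪projCLM T x, y⟫ = ⟪x, projCLM T y⟫ := by
  exact (projCLM_isSelfAdjoint T).isSymmetric x y

lemma norm_sq_proj (T : Submodule ℝ E) (x : E) :
    ‖projCLM T x‖^2 + ‖projCLM Tᗮ x‖^2 = ‖x‖^2 := by
  have hx : x = projCLM T x + projCLM Tᗮ x := by
    rw [projCLM_orthogonal]; simp
  have horth : ⟪projCLM T x, projCLM Tᗮ x⟫ = 0 :=
    Submodule.inner_right_of_mem_orthogonal (𝕜 := ℝ) (projCLM_mem T x) (projCLM_mem Tᗮ x)
  calc ‖projCLM T x‖^2 + ‖projCLM Tᗮ x‖^2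
      = ‖projCLM T x + projCLM Tᗮ x‖^2 := by rw [norm_add_sq_real, horth]; ring
    _ = ‖x‖^2 := by rw [← hx]

lemma norm_sq_add_orth {T : Submodule ℝ E} {y₁ y₂ : E} (h₁ : y₁ ∈ T) (h₂ : y₂ ∈ Tᗮ) :
    ‖y₁ + y₂‖^2 = ‖y₁‖^2 + ‖y₂‖^2 := by
  have horth : ⟪y₁, y₂⟫ = 0 := Submodule.inner_right_of_mem_orthogonal (𝕜 := ℝ) h₁ h₂
  rw [norm_add_sq_real, horth]; ring

/-! ### firstPrincipalCos lemmas -/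

lemma fpcSet_eq_image (T₁ T₂ : Submodule ℝ E) :
    { r : ℝ | ∃ u v : E, u ∈ T₁ ∧ v ∈ T₂ ∧ ‖u‖ = 1 ∧ ‖v‖ = 1 ∧ r = ⟪u, v⟫ } =
      (fun p : E × E => ⟪p.1, p.2⟫) ''
        ((Metric.sphere (0:E) 1 ∩ T₁) ×ˢ (Metric.sphere (0:E) 1 ∩ T₂)) := by
  ext r
  constructor
  · rintro ⟨u, v, hu, hv, hnu, hnv, rfl⟩
    exact ⟨(u, v), ⟨⟨mem_sphere_zero_iff_norm.2 hnu, hu⟩, ⟨mem_sphere_zero_iff_norm.2 hnv, hv⟩⟩, rfl⟩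
  · rintro ⟨⟨u, v⟩, ⟨⟨hsu, hu⟩, ⟨hsv, hv⟩⟩, rfl⟩
    exact ⟨u, v, hu, hv, mem_sphere_zero_iff_norm.1 hsu, mem_sphere_zero_iff_norm.1 hsv, rfl⟩

lemma fpc_exists_max (T₁ T₂ : Submodule ℝ E) (hT₁ : T₁ ≠ ⊥) (hT₂ : T₂ ≠ ⊥) :
    ∃ u v : E, u ∈ T₁ ∧ v ∈ T₂ ∧ ‖u‖ = 1 ∧ ‖v‖ = 1 ∧
      ⟪u, v⟫ = firstPrincipalCos T₁ T₂ := by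
  have hK : IsCompact ((Metric.sphere (0:E) 1 ∩ (T₁:Set E)) ×ˢ (Metric.sphere (0:E) 1 ∩ (T₂:Set E))) := by
    refine IsCompact.prod ?_ ?_ <;>
      exact (isCompact_sphere _ _).inter_right (Submodule.closed_of_finiteDimensional _)
  have hS : IsCompact ((fun p : E × E => ⟪p.1, p.2⟫) ''
      ((Metric.sphere (0:E) 1 ∩ T₁) ×ˢ (Metric.sphere (0:E) 1 ∩ T₂))) :=
    hK.image (continuous_inner)
  have hne : { r : ℝ | ∃ u v : E, u ∈ T₁ ∧ v ∈ T₂ ∧ ‖u‖ = 1 ∧ ‖v‖ = 1 ∧ r = ⟪u, v⟫ }.Nonempty := by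
    obtain ⟨x, hx, hx0⟩ := Submodule.exists_mem_ne_zero_of_ne_bot hT₁
    obtain ⟨y, hy, hy0⟩ := Submodule.exists_mem_ne_zero_of_ne_bot hT₂
    exact ⟨_, ‖x‖⁻¹ • x, ‖y‖⁻¹ • y, T₁.smul_mem _ hx, T₂.smul_mem _ hy,
      norm_smul_inv_norm hx0, norm_smul_inv_norm hy0, rfl⟩
  have hmem : firstPrincipalCos T₁ T₂ ∈
      { r : ℝ | ∃ u v : E, u ∈ T₁ ∧ v ∈ T₂ ∧ ‖u‖ = 1 ∧ ‖v‖ = 1 ∧ r = ⟪u, v⟫ } := by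
    rw [firstPrincipalCos, fpcSet_eq_image]
    exact hS.sSup_mem (by rwa [fpcSet_eq_image] at hne)
  obtain ⟨u, v, hu, hv, hnu, hnv, h⟩ := hmem
  exact ⟨u, v, hu, hv, hnu, hnv, h.symm⟩

lemma fpc_bddAbove (T₁ T₂ : Submodule ℝ E) :
    ∀ r ∈ { r : ℝ | ∃ u v : E, u ∈ T₁ ∧ v ∈ T₂ ∧ ‖u‖ = 1 ∧ ‖v‖ = 1 ∧ r = ⟪u, v⟫ }, r ≤ 1 := by
  rintro r ⟨u, v, hu, hv, hnu, hnv, rfl⟩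
  calc ⟪u, v⟫ ≤ ‖u‖ * ‖v‖ := real_inner_le_norm u v
    _ = 1 := by rw [hnu, hnv]; ring

lemma fpc_inner_le {T₁ T₂ : Submodule ℝ E} {u v : E} (hu : u ∈ T₁) (hv : v ∈ T₂)
    (hnu : ‖u‖ = 1) (hnv : ‖v‖ = 1) : ⟪u, v⟫ ≤ firstPrincipalCos T₁ T₂ := by
  apply le_csSup ⟨1, fun r hr => fpc_bddAbove T₁ T₂ r hr⟩
  exact ⟨u, v, hu, hv, hnu, hnv, rfl⟩

lemma fpc_nonneg (T₁ T₂ : Submodule ℝ E) (hT₁ : T₁ ≠ ⊥) (hT₂ : T₂ ≠ ⊥) :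
    0 ≤ firstPrincipalCos T₁ T₂ := by
  obtain ⟨u, v, hu, hv, hnu, hnv, h⟩ := fpc_exists_max T₁ T₂ hT₁ hT₂
  have h1 := fpc_inner_le hu hv hnu hnv
  have h2 := fpc_inner_le (T₁.neg_mem hu) hv (by rw [norm_neg]; exact hnu) hnv
  rw [inner_neg_left] at h2
  linarith

lemma fpc_symm (T₁ T₂ : Submodule ℝ E) :
    firstPrincipalCos T₁ T₂ = firstPrincipalCos T₂ T₁ := by
  unfold firstPrincipalCos
  congr 1
  ext r
  constructor
  · rintro ⟨u, v, hu, hv, hnu, hnv, rfl⟩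
    exact ⟨v, u, hv, hu, hnv, hnu, real_inner_comm v u⟩
  · rintro ⟨u, v, hu, hv, hnu, hnv, rfl⟩
    exact ⟨v, u, hv, hu, hnv, hnu, real_inner_comm v u⟩

lemma fpc_le_one (T₁ T₂ : Submodule ℝ E) (hT₁ : T₁ ≠ ⊥) (hT₂ : T₂ ≠ ⊥) :
    firstPrincipalCos T₁ T₂ ≤ 1 := by
  obtain ⟨u, v, hu, hv, hnu, hnv, h⟩ := fpc_exists_max T₁ T₂ hT₁ hT₂
  rw [← h]
  exact fpc_bddAbove T₁ T₂ _ ⟨u, v, hu, hv, hnu, hnv, rfl⟩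

lemma fpc_lt_one (T₁ T₂ : Submodule ℝ E) (hT₁ : T₁ ≠ ⊥) (hT₂ : T₂ ≠ ⊥)
    (hinter : T₁ ⊓ T₂ = ⊥) : firstPrincipalCos T₁ T₂ < 1 := by
  obtain ⟨u, v, hu, hv, hnu, hnv, h⟩ := fpc_exists_max T₁ T₂ hT₁ hT₂
  rcases lt_or_eq_of_le (fpc_le_one T₁ T₂ hT₁ hT₂) with hlt | heq
  · exact hlt
  exfalso
  have huv : ⟪u, v⟫ = 1 := by rw [h, heq]
  have : ‖u - v‖^2 = 0 := by
    rw [norm_sub_sq_real, hnu, hnv, huv]; ring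
  have huveq : u = v := by
    have := pow_eq_zero_iff (n := 2) (by norm_num) |>.1 this
    rw [norm_eq_zero] at this
    exact sub_eq_zero.1 this
  have hmem : u ∈ T₁ ⊓ T₂ := ⟨hu, huveq ▸ hv⟩
  rw [hinter, Submodule.mem_bot] at hmem
  rw [hmem, norm_zero] at hnu
  norm_num at hnu

lemma fpc_inner_le' {T₁ T₂ : Submodule ℝ E} (hT₁ : T₁ ≠ ⊥) (hT₂ : T₂ ≠ ⊥)
    {u v : E} (hu : u ∈ T₁) (hv : v ∈ T₂) :
    ⟪u, v⟫ ≤ firstPrincipalCos T₁ T₂ * (‖u‖ * ‖v‖) := by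
  rcases eq_or_ne u 0 with rfl | hu0
  · simp
  rcases eq_or_ne v 0 with rfl | hv0
  · simp
  have h := fpc_inner_le (T₁.smul_mem ‖u‖⁻¹ hu) (T₂.smul_mem ‖v‖⁻¹ hv)
    (norm_smul_inv_norm hu0) (norm_smul_inv_norm hv0)
  rw [real_inner_smul_left, real_inner_smul_right] at h
  have hun : (0:ℝ) < ‖u‖ := norm_pos_iff.2 hu0
  have hvn : (0:ℝ) < ‖v‖ := norm_pos_iff.2 hv0
  have h3 := mul_le_mul_of_nonneg_left h (le_of_lt (mul_pos hun hvn))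
  calc ⟪u, v⟫ = ‖u‖ * ‖v‖ * (‖u‖⁻¹ * (‖v‖⁻¹ * ⟪u, v⟫)) := by
        field_simp
    _ ≤ ‖u‖ * ‖v‖ * firstPrincipalCos T₁ T₂ := h3
    _ = firstPrincipalCos T₁ T₂ * (‖u‖ * ‖v‖) := by ring

lemma fpc_proj_le {T₁ T₂ : Submodule ℝ E} (hT₁ : T₁ ≠ ⊥) (hT₂ : T₂ ≠ ⊥)
    {u : E} (hu : u ∈ T₁) :
    ‖projCLM T₂ u‖ ≤ firstPrincipalCos T₁ T₂ * ‖u‖ := by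
  set w : E := projCLM T₂ u with hwdef
  rcases eq_or_ne w 0 with hw0 | hw0
  · rw [hw0, norm_zero]
    exact mul_nonneg (fpc_nonneg T₁ T₂ hT₁ hT₂) (norm_nonneg u)
  have hwm : w ∈ T₂ := projCLM_mem T₂ u
  have hsub : u - w ∈ T₂ᗮ := Submodule.sub_starProjection_mem_orthogonal (K := T₂) u
  have hiw : ⟪u, w⟫ = ‖w‖^2 := by
    have h0 : ⟪u - w, w⟫ = 0 := Submodule.inner_left_of_mem_orthogonal (𝕜 := ℝ) hwm hsub
    rw [inner_sub_left] at h0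
    rw [real_inner_self_eq_norm_sq] at h0
    linarith
  have hle : ‖w‖^2 ≤ firstPrincipalCos T₁ T₂ * (‖u‖ * ‖w‖) := by
    rw [← hiw]; exact fpc_inner_le' hT₁ hT₂ hu hwm
  have hwn : (0:ℝ) < ‖w‖ := norm_pos_iff.2 hw0
  exact le_of_mul_le_mul_right
    (by rw [pow_two] at hle; linarith : ‖w‖ * ‖w‖ ≤ (firstPrincipalCos T₁ T₂ * ‖u‖) * ‖w‖) hwn

/-! ### dimension and the key lower bound for projections onto the complements -/

lemma finrank_eq_of_trivial_inter {T₁ T₂ : Submodule ℝ E}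
    (hinter : T₁ ⊓ T₂ = ⊥) (hinter' : T₁ᗮ ⊓ T₂ᗮ = ⊥) :
    Module.finrank ℝ T₂ = Module.finrank ℝ (T₁ᗮ) := by
  have h1 : Module.finrank ℝ T₁ + Module.finrank ℝ T₂ ≤ Module.finrank ℝ E := by
    have := Submodule.finrank_sup_add_finrank_inf_eq T₁ T₂
    rw [hinter] at this
    simp only [finrank_bot, add_zero] at this
    rw [← this]
    exact Submodule.finrank_le _
  have h2 : Module.finrank ℝ (T₁ᗮ) + Module.finrank ℝ (T₂ᗮ) ≤ Module.finrank ℝ E := by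
    have := Submodule.finrank_sup_add_finrank_inf_eq T₁ᗮ T₂ᗮ
    rw [hinter'] at this
    simp only [finrank_bot, add_zero] at this
    rw [← this]
    exact Submodule.finrank_le _
  have h3 := Submodule.finrank_add_finrank_orthogonal (K := T₁)
  have h4 := Submodule.finrank_add_finrank_orthogonal (K := T₂)
  omega

set_option maxHeartbeats 1000000 in
lemma proj_lower_bound {T₁ T₂ : Submodule ℝ E} (hT₁ : T₁ ≠ ⊥) (hT₂ : T₂ ≠ ⊥)
    (hinter : T₁ ⊓ T₂ = ⊥) (hinter' : T₁ᗮ ⊓ T₂ᗮ = ⊥)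
    {z : E} (hz : z ∈ T₁ᗮ) :
    Real.sqrt (1 - (firstPrincipalCos T₁ T₂)^2) * ‖z‖ ≤ ‖projCLM T₂ z‖ := by
  set c := firstPrincipalCos T₁ T₂ with hcdef
  have hc0 : 0 ≤ c := fpc_nonneg T₁ T₂ hT₁ hT₂
  have hc1 : c < 1 := fpc_lt_one T₁ T₂ hT₁ hT₂ hinter
  set s := Real.sqrt (1 - c^2) with hsdef
  have hs2 : s^2 = 1 - c^2 := Real.sq_sqrt (by nlinarith)
  have hs0 : 0 < s := Real.sqrt_pos.2 (by nlinarith)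
  rcases eq_or_ne z 0 with rfl | hz0
  · simp
  -- the map Q₁ : T₂ → T₁ᗮ
  set g : T₂ →ₗ[ℝ] (T₁ᗮ : Submodule ℝ E) :=
    ((Submodule.orthogonalProjection (T₁ᗮ)).toLinearMap.comp (T₂.subtype)) with hgdef
  have hgapply : ∀ v : T₂, (g v : E) = projCLM T₁ᗮ (v : E) := fun v => rfl
  have hginj : Function.Injective g := by
    rw [← LinearMap.ker_eq_bot, Submodule.eq_bot_iff]
    rintro ⟨v, hv⟩ hker
    have h0 : projCLM T₁ᗮ v = 0 := by
      have := congrArg (Subtype.val) (hker : g ⟨v, hv⟩ = 0)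
      simpa [hgapply] using this
    have hvT₁ : v ∈ T₁ := by
      have hQ : projCLM T₁ᗮ v = v - projCLM T₁ v := by rw [projCLM_orthogonal]; simp
      rw [hQ] at h0
      rw [sub_eq_zero.1 h0]; exact projCLM_mem T₁ v
    have : v ∈ T₁ ⊓ T₂ := ⟨hvT₁, hv⟩
    rw [hinter, Submodule.mem_bot] at this
    simp [this]
  have hgsurj : Function.Surjective g :=
    (LinearMap.injective_iff_surjective_of_finrank_eq_finrank
      (finrank_eq_of_trivial_inter hinter hinter')).1 hginj
  -- find w₀ ∈ T₂ with Q₁ w₀ = s • z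
  obtain ⟨⟨w₀, hw₀T₂⟩, hw₀⟩ := hgsurj ⟨s • z, (T₁ᗮ).smul_mem s hz⟩
  have hw₀eq : projCLM T₁ᗮ w₀ = s • z := by
    have := congrArg (Subtype.val) hw₀
    simpa [hgapply] using this
  -- bound ‖w₀‖ ≤ ‖z‖
  have hPle : ‖projCLM T₁ w₀‖ ≤ c * ‖w₀‖ := by
    rw [hcdef, fpc_symm]
    exact fpc_proj_le hT₂ hT₁ hw₀T₂
  have hQw₀ : s^2 * ‖w₀‖^2 ≤ ‖projCLM T₁ᗮ w₀‖^2 := by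
    have hpw := norm_sq_proj T₁ w₀
    have : ‖projCLM T₁ w₀‖^2 ≤ c^2*‖w₀‖^2 := by nlinarith [norm_nonneg (projCLM T₁ w₀), norm_nonneg w₀]
    nlinarith
  have hw₀le : ‖w₀‖ ≤ ‖z‖ := by
    rw [hw₀eq, norm_smul, Real.norm_eq_abs, abs_of_pos hs0, mul_pow] at hQw₀
    have hs2pos : (0:ℝ) < s^2 := by positivity
    have h2 : ‖w₀‖^2 ≤ ‖z‖^2 := by nlinarith
    nlinarith [norm_nonneg w₀, norm_nonneg z, sq_nonneg (‖w₀‖ - ‖z‖)]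
  -- main estimate
  have hinner : ⟪projCLM T₂ z, w₀⟫ = s * ‖z‖^2 := by
    have h1 : ⟪projCLM T₂ z, w₀⟫ = ⟪z, projCLM T₂ w₀⟫ := inner_projCLM_left T₂ z w₀
    have h2 : projCLM T₂ w₀ = w₀ := projCLM_eq_self hw₀T₂
    have h3 : ⟪z, w₀⟫ = ⟪z, projCLM T₁ᗮ w₀⟫ := by
      have hQ : projCLM T₁ᗮ w₀ = w₀ - projCLM T₁ w₀ := by rw [projCLM_orthogonal]; simp
      rw [hQ, inner_sub_right]
      have : ⟪z, projCLM T₁ w₀⟫ = 0 :=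
        Submodule.inner_left_of_mem_orthogonal (𝕜 := ℝ) (projCLM_mem T₁ w₀) hz
      rw [this]; ring
    rw [h1, h2, h3, hw₀eq, real_inner_smul_right, real_inner_self_eq_norm_sq]
  have hcs : ⟪projCLM T₂ z, w₀⟫ ≤ ‖projCLM T₂ z‖ * ‖w₀‖ := real_inner_le_norm _ _
  have hzn : (0:ℝ) < ‖z‖ := norm_pos_iff.2 hz0
  have hstep : ‖projCLM T₂ z‖ * ‖w₀‖ ≤ ‖projCLM T₂ z‖ * ‖z‖ :=
    mul_le_mul_of_nonneg_left hw₀le (norm_nonneg _)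
  nlinarith [norm_nonneg (projCLM T₂ z)]

/-- For `w ∈ T₁ᗮ`, the projection onto `T₂ᗮ` contracts by `c₁`. -/
lemma proj_orth_le {T₁ T₂ : Submodule ℝ E} (hT₁ : T₁ ≠ ⊥) (hT₂ : T₂ ≠ ⊥)
    (hinter : T₁ ⊓ T₂ = ⊥) (hinter' : T₁ᗮ ⊓ T₂ᗮ = ⊥)
    {w : E} (hw : w ∈ T₁ᗮ) :
    ‖projCLM T₂ᗮ w‖ ≤ firstPrincipalCos T₁ T₂ * ‖w‖ := by
  set c := firstPrincipalCos T₁ T₂ with hcdef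
  have hc0 : 0 ≤ c := fpc_nonneg T₁ T₂ hT₁ hT₂
  have hc1 : c ≤ 1 := fpc_le_one T₁ T₂ hT₁ hT₂
  have hlb := proj_lower_bound hT₁ hT₂ hinter hinter' hw
  have hs2 : (Real.sqrt (1 - c^2))^2 = 1 - c^2 := Real.sq_sqrt (by nlinarith)
  have hps := norm_sq_proj T₂ w
  have hlb2 : (Real.sqrt (1 - c^2) * ‖w‖)^2 ≤ ‖projCLM T₂ w‖^2 :=
    pow_le_pow_left₀ (by positivity) hlb 2
  rw [mul_pow, hs2] at hlb2
  have hsq : ‖projCLM T₂ᗮ w‖^2 ≤ c^2 * ‖w‖^2 := by nlinarith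
  nlinarith [norm_nonneg (projCLM T₂ᗮ w), norm_nonneg w, mul_nonneg hc0 (norm_nonneg w),
    add_nonneg (norm_nonneg (projCLM T₂ᗮ w)) (mul_nonneg hc0 (norm_nonneg w))]

/-! ### norms of powers of self-adjoint operators -/

set_option maxHeartbeats 2000000 in
lemma selfadj_norm_pow [Nontrivial E] {S : E →L[ℝ] E} (hS : IsSelfAdjoint S) (k : ℕ) :
    ‖S^k‖ = ‖S‖^k := by
  have two_pow : ∀ m : ℕ, ‖S^(2^m)‖ = ‖S‖^(2^m) := by
    intro m
    induction m with
    | zero => simp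
    | succ n ih =>
      have hsa : IsSelfAdjoint (S^(2^n)) := hS.pow _
      have hmul : ‖S^(2^n) * S^(2^n)‖ = ‖S^(2^n)‖ * ‖S^(2^n)‖ := by
        calc ‖S^(2^n) * S^(2^n)‖ = ‖star (S^(2^n)) * S^(2^n)‖ := by rw [hsa.star_eq]
          _ = ‖S^(2^n)‖ * ‖S^(2^n)‖ := CStarRing.norm_star_mul_self
      have hsplit : S^(2^(n+1)) = S^(2^n) * S^(2^n) := by
        rw [← pow_add]; congr 1; omega
      rw [hsplit, hmul, ih, ← pow_add]
      congr 1
      omega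
  rcases eq_or_ne (‖S‖) 0 with hS0 | hS0
  · have hSz : S = 0 := norm_eq_zero.1 hS0
    subst hSz
    rcases Nat.eq_zero_or_pos k with rfl | hk
    · simp
    · simp [zero_pow hk.ne']
  have hSpos : 0 < ‖S‖ := lt_of_le_of_ne (norm_nonneg S) (Ne.symm hS0)
  rcases Nat.eq_zero_or_pos k with rfl | hk
  · simp
  have hk2 : k < 2^k := Nat.lt_two_pow_self
  refine le_antisymm (norm_pow_le' S hk) ?_
  have hsplit : S^(2^k) = S^k * S^(2^k - k) := by rw [← pow_add]; congr 1; omega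
  have h1 : ‖S‖^(2^k) ≤ ‖S^k‖ * ‖S‖^(2^k - k) := by
    rw [← two_pow k, hsplit]
    calc ‖S^k * S^(2^k - k)‖ ≤ ‖S^k‖ * ‖S^(2^k - k)‖ := norm_mul_le _ _
      _ ≤ ‖S^k‖ * ‖S‖^(2^k - k) :=
          mul_le_mul_of_nonneg_left (norm_pow_le' S (by omega)) (norm_nonneg _)
  have h2 : ‖S‖^(2^k) = ‖S‖^k * ‖S‖^(2^k - k) := by rw [← pow_add]; congr 1; omega
  have hX : (0:ℝ) < ‖S‖^(2^k - k) := pow_pos hSpos _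
  rw [h2] at h1
  exact le_of_mul_le_mul_right h1 hX

end Aux

section MainAux
variable {E : Type*} [NormedAddCommGroup E] [InnerProductSpace ℝ E] [FiniteDimensional ℝ E]

lemma le_of_sq_le_sq' {a b : ℝ} (h : a^2 ≤ b^2) (hb : 0 ≤ b) : a ≤ b := by
  nlinarith [sq_nonneg (a - b), sq_nonneg (a + b)]

lemma eq_of_sq_eq_sq' {a b : ℝ} (h : a^2 = b^2) (ha : 0 ≤ a) (hb : 0 ≤ b) : a = b :=
  le_antisymm (le_of_sq_le_sq' h.le hb) (le_of_sq_le_sq' h.ge ha)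

end MainAux

set_option maxHeartbeats 1000000 in
set_option synthInstance.maxHeartbeats 1000000 in
/-- When `T₁ ∩ T₂ = {0}` and `T₁^⊥ ∩ T₂^⊥ = {0}`, the powers of the relaxed linearized
Douglas–Rachford matrix converge linearly to `0` with optimal rate governed by the cosine
of the first principal angle. -/
theorem DR_matrix_rate_trivial_intersection {E : Type*} [NormedAddCommGroup E]
    [InnerProductSpace ℝ E] [FiniteDimensional ℝ E]
    (T₁ T₂ : Submodule ℝ E) (hT₁ : T₁ ≠ ⊥) (hT₂ : T₂ ≠ ⊥)
    (hinter : T₁ ⊓ T₂ = ⊥) (hinter' : T₁ᗮ ⊓ T₂ᗮ = ⊥)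
    (M : E →L[ℝ] E)
    (hM : M = (projCLM T₁).comp (projCLM T₂) + (projCLM T₁ᗮ).comp (projCLM T₂ᗮ))
    {l : ℝ} (hl : l ∈ Set.Ioo (0 : ℝ) 2)
    (Ml : E →L[ℝ] E) (hMl : Ml = (1 - l) • (1 : E →L[ℝ] E) + l • M)
    (c₁ : ℝ) (hc₁ : c₁ = firstPrincipalCos T₁ T₂) :
    (∀ k : ℕ, ‖Ml ^ k‖ = (Real.sqrt ((1 - l) ^ 2 + l * (2 - l) * c₁ ^ 2)) ^ k) ∧
      Real.sqrt ((1 - l) ^ 2 + l * (2 - l) * c₁ ^ 2) < 1 := by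
  obtain ⟨hl0, hl2⟩ := hl
  have hl2l : (0:ℝ) < l * (2 - l) := mul_pos hl0 (by linarith)
  -- E is nontrivial
  obtain ⟨x₀, hx₀T, hx₀⟩ := Submodule.exists_mem_ne_zero_of_ne_bot hT₁
  haveI : Nontrivial E := ⟨⟨x₀, 0, hx₀⟩⟩
  -- basic facts about c₁
  have hc₁0 : 0 ≤ c₁ := hc₁ ▸ fpc_nonneg T₁ T₂ hT₁ hT₂
  have hc₁1 : c₁ < 1 := hc₁ ▸ fpc_lt_one T₁ T₂ hT₁ hT₂ hinter
  obtain ⟨u, v, hu, hv, hnu, hnv, huv⟩ := fpc_exists_max T₁ T₂ hT₁ hT₂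
  rw [← hc₁] at huv
  -- operator algebra
  set P₁ := projCLM T₁ with hP₁
  set P₂ := projCLM T₂ with hP₂
  set Q₁ := projCLM T₁ᗮ with hQ₁def
  set Q₂ := projCLM T₂ᗮ with hQ₂def
  have hQ₁ : Q₁ = 1 - P₁ := projCLM_orthogonal T₁
  have hQ₂ : Q₂ = 1 - P₂ := projCLM_orthogonal T₂
  have hM' : M = P₁ * P₂ + Q₁ * Q₂ := hM
  have hstarM : star M = P₂ * P₁ + Q₂ * Q₁ := by
    rw [hM', star_add, star_mul, star_mul, hP₁, hP₂, hQ₁def, hQ₂def,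
      projCLM_star, projCLM_star, projCLM_star, projCLM_star]
  have hp := projCLM_idem T₁
  have hq := projCLM_idem T₂
  set N : E →L[ℝ] E := M * star M with hN
  have hMMt : M * star M = 1 - (P₁ - P₂)^2 := by
    rw [hstarM, hM', hQ₁, hQ₂]; exact ring_id2 P₁ P₂ hp hq
  have hMtM : star M * M = N := by
    rw [hstarM, hM', hQ₁, hQ₂, hN, hstarM, hM', hQ₁, hQ₂,
      ring_id1 P₁ P₂ hp hq, ring_id2 P₁ P₂ hp hq]
  have hsum : M + star M = 2 * N := by
    rw [hstarM, hM', hQ₁, hQ₂, hN, hstarM, hM', hQ₁, hQ₂,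
      ring_id3 P₁ P₂ hp hq, ring_id2 P₁ P₂ hp hq]
  have hstar' : star M = N + N - M := by
    rw [← two_mul, ← hsum]; abel
  have hstarMl : star Ml = (1 - l) • 1 + l • star M := by
    rw [hMl, star_add, star_smul, star_smul, star_one, star_trivial, star_trivial]
  have expand : ∀ A B : E →L[ℝ] E, ((1-l) • (1:E →L[ℝ] E) + l • A) * ((1-l) • 1 + l • B)
      = ((1-l)*(1-l)) • (1:E →L[ℝ] E) + ((1-l)*l) • B + (l*(1-l)) • A + (l*l) • (A*B) := by
    intro A B
    rw [add_mul, mul_add, mul_add, smul_mul_smul_comm, smul_mul_smul_comm,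
      smul_mul_smul_comm, smul_mul_smul_comm, one_mul, one_mul, mul_one]
    abel
  have key : star Ml * Ml = ((1-l)^2) • (1:E →L[ℝ] E) + (l*(2-l)) • N := by
    rw [hstarMl, hMl, expand (star M) M, hMtM, hstar']
    module
  have key2 : Ml * star Ml = ((1-l)^2) • (1:E →L[ℝ] E) + (l*(2-l)) • N := by
    rw [hstarMl, hMl, expand M (star M), ← hN, hstar']
    module
  have hcomm : Commute (star Ml) Ml := by
    show star Ml * Ml = Ml * star Ml
    rw [key, key2]
  -- pointwise formula for ‖Ml x‖²
  have hpoint : ∀ x : E, ‖Ml x‖^2 = (1-l)^2 * ‖x‖^2 + l*(2-l) * ‖star M x‖^2 := by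
    intro x
    have h1 : ⟪(star Ml * Ml) x, x⟫ = ‖Ml x‖^2 := by
      show ⟪(star Ml) (Ml x), x⟫ = ‖Ml x‖^2
      rw [ContinuousLinearMap.star_eq_adjoint, ContinuousLinearMap.adjoint_inner_left,
        real_inner_self_eq_norm_sq]
    have h2 : ⟪N x, x⟫ = ‖star M x‖^2 := by
      show ⟪M ((star M) x), x⟫ = ‖star M x‖^2
      rw [← ContinuousLinearMap.adjoint_inner_right, ← ContinuousLinearMap.star_eq_adjoint,
        real_inner_self_eq_norm_sq]
    calc ‖Ml x‖^2 = ⟪(star Ml * Ml) x, x⟫ := h1.symm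
      _ = (1-l)^2 * ⟪x, x⟫ + (l*(2-l)) * ⟪N x, x⟫ := by
          rw [key]
          simp only [ContinuousLinearMap.add_apply, ContinuousLinearMap.smul_apply,
            ContinuousLinearMap.one_apply, inner_add_left, real_inner_smul_left]
      _ = (1-l)^2 * ‖x‖^2 + l*(2-l) * ‖star M x‖^2 := by
          rw [h2, real_inner_self_eq_norm_sq]
  -- norm bound for star M
  have hb : ∀ x : E, ‖star M x‖ ≤ c₁ * ‖x‖ := by
    intro x
    have happ : star M x = P₂ (P₁ x) + Q₂ (Q₁ x) := by
      rw [hstarM]; rfl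
    have hsq : ‖star M x‖^2 = ‖P₂ (P₁ x)‖^2 + ‖Q₂ (Q₁ x)‖^2 := by
      rw [happ]; exact norm_sq_add_orth (projCLM_mem _ _) (projCLM_mem _ _)
    have hbp : ‖P₂ (P₁ x)‖ ≤ c₁ * ‖P₁ x‖ := hc₁ ▸ fpc_proj_le hT₁ hT₂ (projCLM_mem T₁ x)
    have hbq : ‖Q₂ (Q₁ x)‖ ≤ c₁ * ‖Q₁ x‖ :=
      hc₁ ▸ proj_orth_le hT₁ hT₂ hinter hinter' (projCLM_mem T₁ᗮ x)
    have hx : ‖P₁ x‖^2 + ‖Q₁ x‖^2 = ‖x‖^2 := norm_sq_proj T₁ x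
    have hsq2 : ‖star M x‖^2 ≤ (c₁*‖x‖)^2 := by
      have hbp2 := pow_le_pow_left₀ (norm_nonneg (P₂ (P₁ x))) hbp 2
      have hbq2 := pow_le_pow_left₀ (norm_nonneg (Q₂ (Q₁ x))) hbq 2
      rw [mul_pow] at hbp2 hbq2
      rw [mul_pow, ← hx]
      nlinarith [hbp2, hbq2]
    exact le_of_sq_le_sq' hsq2 (mul_nonneg hc₁0 (norm_nonneg x))
  -- the maximizing pair realizes the norm
  have hMtu : ‖star M u‖ = c₁ := by
    have hP₁u : P₁ u = u := projCLM_eq_self hu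
    have hQ₁u : Q₁ u = 0 := projCLM_eq_zero (Submodule.le_orthogonal_orthogonal T₁ hu)
    have happ : star M u = P₂ u := by
      rw [hstarM]
      show P₂ (P₁ u) + Q₂ (Q₁ u) = P₂ u
      rw [hP₁u, hQ₁u, map_zero, add_zero]
    have hle : ‖P₂ u‖ ≤ c₁ := by
      have h := hc₁ ▸ fpc_proj_le hT₁ hT₂ hu
      rwa [hnu, mul_one] at h
    have hge : c₁ ≤ ‖P₂ u‖ := by
      have hvv : P₂ v = v := projCLM_eq_self hv
      have h1 : c₁ = ⟪P₂ u, v⟫ := by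
        rw [← huv]
        calc ⟪u, v⟫ = ⟪u, P₂ v⟫ := by rw [hvv]
          _ = ⟪P₂ u, v⟫ := (inner_projCLM_left T₂ u v).symm
      have h2 : ⟪P₂ u, v⟫ ≤ ‖P₂ u‖ * ‖v‖ := real_inner_le_norm _ _
      rw [hnv, mul_one] at h2
      linarith
    rw [happ]; linarith
  -- the rate
  set r := Real.sqrt ((1-l)^2 + l*(2-l)*c₁^2) with hr
  have hargnn : 0 ≤ (1-l)^2 + l*(2-l)*c₁^2 :=
    add_nonneg (sq_nonneg _) (mul_nonneg hl2l.le (sq_nonneg c₁))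
  have hr2 : r^2 = (1-l)^2 + l*(2-l)*c₁^2 := Real.sq_sqrt hargnn
  have hr0 : 0 ≤ r := Real.sqrt_nonneg _
  have hMlle : ‖Ml‖ ≤ r := by
    apply ContinuousLinearMap.opNorm_le_bound _ hr0
    intro x
    have h1 := hpoint x
    have h2 : ‖star M x‖^2 ≤ (c₁*‖x‖)^2 :=
      pow_le_pow_left₀ (norm_nonneg _) (hb x) 2
    have h3 : ‖Ml x‖^2 ≤ (r*‖x‖)^2 := by
      rw [mul_pow, hr2]
      rw [mul_pow] at h2
      nlinarith [hl2l.le]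
    exact le_of_sq_le_sq' h3 (mul_nonneg hr0 (norm_nonneg _))
  have hMlge : r ≤ ‖Ml‖ := by
    have h1 := hpoint u
    rw [hMtu, hnu] at h1
    have h2 : ‖Ml u‖^2 = r^2 := by rw [hr2, h1]; ring
    have h3 : ‖Ml u‖ = r := eq_of_sq_eq_sq' h2 (norm_nonneg _) hr0
    calc r = ‖Ml u‖ := h3.symm
      _ ≤ ‖Ml‖ * ‖u‖ := Ml.le_opNorm u
      _ = ‖Ml‖ := by rw [hnu, mul_one]
  have hMlnorm : ‖Ml‖ = r := le_antisymm hMlle hMlge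
  -- norms of powers
  have hpow : ∀ k : ℕ, ‖Ml^k‖ = ‖Ml‖^k := by
    intro k
    have hsa : IsSelfAdjoint (star Ml * Ml) := IsSelfAdjoint.star_mul_self Ml
    have h1 : ‖Ml^k‖^2 = ‖(star Ml * Ml)^k‖ := by
      rw [hcomm.mul_pow, ← star_pow]
      rw [CStarRing.norm_star_mul_self (x := Ml^k)]
      ring
    have h2 : ‖(star Ml * Ml)^k‖ = ‖star Ml * Ml‖^k := selfadj_norm_pow hsa k
    have h3 : ‖star Ml * Ml‖ = ‖Ml‖^2 := by
      rw [CStarRing.norm_star_mul_self (x := Ml)]; ring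
    have h4 : ‖Ml^k‖^2 = (‖Ml‖^k)^2 := by
      rw [h1, h2, h3, ← pow_mul, ← pow_mul, mul_comm]
    exact eq_of_sq_eq_sq' h4 (norm_nonneg _) (pow_nonneg (norm_nonneg _) _)
  constructor
  · intro k
    rw [hpow k, hMlnorm]
  · have hlt : r^2 < 1 := by
      rw [hr2]
      nlinarith [mul_pos hl2l (show (0:ℝ) < 1 - c₁^2 by nlinarith [hc₁0, hc₁1])]
    nlinarith [hr0, hlt, sq_nonneg (r - 1), sq_nonneg (r + 1)]
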